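/- Linear-quadratic verification (average-cost RSPIC): let A, Q, S, Σ be real n×n matrices with Q, Σ, S symmetric, Σ positive definite, and suppose S satisfies the algebraic Riccati equation 0 = Q + AᵀS + SA + (φ−ψ)·SΣS for real parameters φ ≠ ψ. Define z(x) = exp((φ−ψ)·½⟨x, Sx⟩), q(x) = ½⟨x, Qx⟩, a(x) = Ax, and χ = ½ trace(SΣ). Then z satisfies the linear PDE 0 = (φ−ψ)(q(x) − χ)·z(x) + ⟨a(x), ∇z(x)⟩ + ½ trace(Σ∇²z(x)) for all x ∈ ℝⁿ. -/

import Mathlib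

open Matrix Real


noncomputable def dlinCLM {n : ℕ} (w : Fin n → ℝ) : (Fin n → ℝ) →L[ℝ] ℝ :=
  LinearMap.toContinuousLinearMap
    { toFun := fun v => v ⬝ᵥ w
      map_add' := fun a b => add_dotProduct a b w
      map_smul' := fun c a => smul_dotProduct c a w }

@[simp] lemma dlinCLM_apply {n : ℕ} (w v : Fin n → ℝ) : dlinCLM w v = v ⬝ᵥ w := rfl

noncomputable def bilCLM {n : ℕ} (M : Matrix (Fin n) (Fin n) ℝ) :
    (Fin n → ℝ) →L[ℝ] (Fin n → ℝ) →L[ℝ] ℝ :=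
  LinearMap.toContinuousLinearMap
    { toFun := fun v => dlinCLM (Mᵀ.mulVec v)
      map_add' := by
        intro a b; ext w; simp [Matrix.mulVec_add, dotProduct_add]
      map_smul' := by
        intro c a; ext w; simp [Matrix.mulVec_smul, dotProduct_smul] }

@[simp] lemma bilCLM_apply {n : ℕ} (M : Matrix (Fin n) (Fin n) ℝ) (v w : Fin n → ℝ) :
    bilCLM M v w = v ⬝ᵥ M.mulVec w := by
  show w ⬝ᵥ Mᵀ.mulVec v = _
  rw [dotProduct_comm, mulVec_transpose, ← dotProduct_mulVec]

lemma quad_hasFDerivAt {n : ℕ} (M : Matrix (Fin n) (Fin n) ℝ) (x : Fin n → ℝ) :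
    HasFDerivAt (fun y : Fin n → ℝ => y ⬝ᵥ M.mulVec y)
      ((bilCLM M x) + (bilCLM M).flip (x)) x := by
  have h := ((bilCLM M).hasFDerivAt (x := x)).clm_apply (hasFDerivAt_id x)
  simpa using h

/-- linear-quadratic verification for the average-cost linear HJB.
If `S` solves the Riccati equation `0 = Q + AᵀS + SA + (φ−ψ)SΣS`, then
`z(x) = exp((φ−ψ)·½⟨x,Sx⟩)` solves
`0 = (φ−ψ)(q(x)−χ)z + ⟨Ax, ∇z⟩ + ½ tr(Σ∇²z)` with `q(x) = ½⟨x,Qx⟩` and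
`χ = ½ tr(SΣ)`. -/
theorem stmt_8 {n : ℕ}
    (A Q S Sig : Matrix (Fin n) (Fin n) ℝ)
    (hQ : Q.IsSymm) (hS : S.IsSymm) (hSig : Sig.IsSymm) (hSigpd : Sig.PosDef)
    (φ ψ : ℝ) (hφψ : φ ≠ ψ)
    (hRiccati : 0 = Q + Aᵀ * S + S * A + (φ - ψ) • (S * Sig * S))
    (z : (Fin n → ℝ) → ℝ)
    (hz : z = fun x => Real.exp ((φ - ψ) * ((1 / 2) * (x ⬝ᵥ S.mulVec x))))
    (q : (Fin n → ℝ) → ℝ) (hq : q = fun x => (1 / 2) * (x ⬝ᵥ Q.mulVec x))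
    (χ : ℝ) (hχ : χ = (1 / 2) * (S * Sig).trace) :
    ∀ x : Fin n → ℝ,
      0 = (φ - ψ) * (q x - χ) * z x
        + (∑ i : Fin n, A.mulVec x i * fderiv ℝ z x (Pi.single i 1))
        + (1 / 2) * (∑ i : Fin n, ∑ j : Fin n,
            Sig i j * fderiv ℝ (fun y => fderiv ℝ z y (Pi.single j 1)) x (Pi.single i 1)) := by
  set c : ℝ := φ - ψ with hc
  -- symmetry of the quadratic form
  have hsym : ∀ v w : Fin n → ℝ, v ⬝ᵥ S.mulVec w = w ⬝ᵥ S.mulVec v := by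
    intro v w
    rw [dotProduct_mulVec]
    nth_rewrite 1 [← hS]
    rw [vecMul_transpose, dotProduct_comm]
  have hzform : z = fun x => Real.exp ((c * (1 / 2)) * (x ⬝ᵥ S.mulVec x)) := by
    rw [hz]; funext x; ring_nf
  -- derivative of z
  have hzd : ∀ y : Fin n → ℝ, HasFDerivAt z
      (Real.exp ((c * (1 / 2)) * (y ⬝ᵥ S.mulVec y)) •
        ((c * (1 / 2)) • ((bilCLM S y) + (bilCLM S).flip y))) y := by
    intro y
    have h2 := ((quad_hasFDerivAt S y).const_mul (c * (1 / 2))).exp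
    rw [hzform]
    exact h2
  have hzy : ∀ y : Fin n → ℝ, z y = Real.exp ((c * (1 / 2)) * (y ⬝ᵥ S.mulVec y)) := by
    intro y; rw [hzform]
  have key1 : ∀ (y v : Fin n → ℝ), fderiv ℝ z y v = z y * (c * (y ⬝ᵥ S.mulVec v)) := by
    intro y v
    rw [(hzd y).fderiv]
    simp only [ContinuousLinearMap.smul_apply, ContinuousLinearMap.add_apply,
      ContinuousLinearMap.flip_apply, bilCLM_apply, smul_eq_mul]
    rw [hsym v y, hzy y]
    ring
  -- second derivative
  have key2 : ∀ (i j : Fin n) (x : Fin n → ℝ),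
      fderiv ℝ (fun y => fderiv ℝ z y (Pi.single j 1)) x (Pi.single i 1)
        = z x * (c * (x ⬝ᵥ S.mulVec (Pi.single i 1))) * (c * (x ⬝ᵥ S.mulVec (Pi.single j 1)))
          + z x * (c * (Pi.single i 1 ⬝ᵥ S.mulVec (Pi.single j 1))) := by
    intro i j x
    have hrw : (fun y => fderiv ℝ z y (Pi.single j 1))
        = fun y => z y * (c * (y ⬝ᵥ S.mulVec (Pi.single j 1))) := by
      funext y; exact key1 y (Pi.single j 1)
    rw [hrw]
    set w : Fin n → ℝ := S.mulVec (Pi.single j 1) with hw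
    have hlin : HasFDerivAt (fun y : Fin n → ℝ => c * (y ⬝ᵥ w)) (c • dlinCLM w) x :=
      ((dlinCLM w).hasFDerivAt (x := x)).const_mul c
    have hmul := (hzd x).mul hlin
    rw [show (fun y => z y * (c * (y ⬝ᵥ w))) = (z * fun y => c * (y ⬝ᵥ w)) from rfl, hmul.fderiv]
    simp only [ContinuousLinearMap.add_apply, ContinuousLinearMap.smul_apply,
      ContinuousLinearMap.flip_apply, bilCLM_apply, dlinCLM_apply, smul_eq_mul]
    rw [hsym (Pi.single i 1) x, hzy x]
    ring
  intro x
  -- scalar Riccati identity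
  have hr0 : (0 : ℝ) = x ⬝ᵥ (Q + Aᵀ * S + S * A + c • (S * Sig * S)).mulVec x := by
    rw [← hRiccati]; simp
  have hr : (0 : ℝ) = x ⬝ᵥ Q.mulVec x + 2 * (A.mulVec x ⬝ᵥ S.mulVec x)
      + c * (S.mulVec x ⬝ᵥ Sig.mulVec (S.mulVec x)) := by
    have g1 : x ⬝ᵥ (Aᵀ * S).mulVec x = A.mulVec x ⬝ᵥ S.mulVec x := by
      rw [← mulVec_mulVec, dotProduct_mulVec, vecMul_transpose]
    have g2 : x ⬝ᵥ (S * A).mulVec x = A.mulVec x ⬝ᵥ S.mulVec x := by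
      rw [← mulVec_mulVec, hsym]
    have g3 : x ⬝ᵥ (S * Sig * S).mulVec x = S.mulVec x ⬝ᵥ Sig.mulVec (S.mulVec x) := by
      rw [Matrix.mul_assoc, ← mulVec_mulVec, hsym,
        ← mulVec_mulVec, dotProduct_comm]
    rw [hr0]
    simp only [Matrix.add_mulVec, dotProduct_add, Matrix.smul_mulVec, dotProduct_smul,
      smul_eq_mul, g1, g2, g3]
    ring
  -- evaluate the sums
  have e1 : ∀ v : Fin n → ℝ, ∀ i : Fin n, v ⬝ᵥ S.mulVec (Pi.single i 1) = S.mulVec v i := by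
    intro v i
    rw [hsym]
    simp [dotProduct, Pi.single_apply, mul_comm]
  have e2 : ∀ i j : Fin n, Pi.single i 1 ⬝ᵥ S.mulVec (Pi.single j 1) = S i j := by
    intro i j
    have := e1 (Pi.single i 1) j
    rw [e1]
    simp only [Matrix.mulVec, dotProduct, Pi.single_apply, mul_ite, mul_one, mul_zero,
      Finset.sum_ite_eq', Finset.mem_univ, if_true]
    exact hS.apply i j
  have sum1 : ∑ i : Fin n, A.mulVec x i * fderiv ℝ z x (Pi.single i 1)
      = c * z x * (A.mulVec x ⬝ᵥ S.mulVec x) := by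
    rw [show A.mulVec x ⬝ᵥ S.mulVec x = ∑ i : Fin n, A.mulVec x i * S.mulVec x i from rfl,
      Finset.mul_sum]
    refine Finset.sum_congr rfl fun i _ => ?_
    rw [key1, e1]
    ring
  have sum2 : ∑ i : Fin n, ∑ j : Fin n,
      Sig i j * fderiv ℝ (fun y => fderiv ℝ z y (Pi.single j 1)) x (Pi.single i 1)
      = c * c * z x * (S.mulVec x ⬝ᵥ Sig.mulVec (S.mulVec x)) + c * z x * (S * Sig).trace := by
    have tr : (S * Sig).trace = ∑ i : Fin n, ∑ j : Fin n, Sig i j * S i j := by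
      rw [Matrix.trace_mul_comm]
      simp only [Matrix.trace, Matrix.diag, Matrix.mul_apply]
      refine Finset.sum_congr rfl fun i _ => Finset.sum_congr rfl fun j _ => ?_
      rw [hS.apply]
    have dp : S.mulVec x ⬝ᵥ Sig.mulVec (S.mulVec x)
        = ∑ i : Fin n, ∑ j : Fin n, Sig i j * (S.mulVec x i * S.mulVec x j) := by
      rw [show S.mulVec x ⬝ᵥ Sig.mulVec (S.mulVec x)
          = ∑ i : Fin n, S.mulVec x i * Sig.mulVec (S.mulVec x) i from rfl]
      refine Finset.sum_congr rfl fun i _ => ?_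
      rw [show Sig.mulVec (S.mulVec x) i = ∑ j : Fin n, Sig i j * S.mulVec x j from rfl,
        Finset.mul_sum]
      exact Finset.sum_congr rfl fun j _ => by ring
    rw [tr, dp, Finset.mul_sum, Finset.mul_sum, ← Finset.sum_add_distrib]
    refine Finset.sum_congr rfl fun i _ => ?_
    rw [Finset.mul_sum, Finset.mul_sum, ← Finset.sum_add_distrib]
    refine Finset.sum_congr rfl fun j _ => ?_
    rw [key2, e1, e1, e2]
    ring
  rw [sum1, sum2, hq, hχ]
  have hzx : z x ≠ 0 := by rw [hz]; exact Real.exp_ne_zero _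
  linear_combination (c * z x / 2) * hr
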